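/- Let G and G' be iCGS, R an A-bisimulation, and q R q'. Then for every state A-formula φ of ATL* (under either the subjective or objective imperfect-information memoryless semantics), (G, q) ⊨ φ iff (G', q') ⊨ φ. Moreover, if runs λ, λ' satisfy λ[i] R λ'[i] for all i, then for every path A-formula ψ, (G, λ) ⊨ ψ iff (G', λ') ⊨ ψ. -/
import Mathlib


/-- An imperfect-information concurrent game structure (iCGS), given as raw data;
the defining axioms are collected in `iCGS.Valid`. -/
structure iCGS (Ag AP S Act : Type) where
  init : S
  indist : Ag → S → S → Prop
  protocol : Ag → S → Set Act
  trans : S → (Ag → Act) → S → Prop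
  label : S → Set AP

namespace iCGS

variable {Ag AP S S' Act Act' : Type}

/-- The axioms of an iCGS. -/
def Valid (G : iCGS Ag AP S Act) : Prop :=
  (∀ i, Equivalence (G.indist i)) ∧
  (∀ i s, (G.protocol i s).Nonempty) ∧
  (∀ i s s', G.indist i s s' → G.protocol i s = G.protocol i s') ∧
  (∀ s a, (∃ s', G.trans s a s') ↔ ∀ i, a i ∈ G.protocol i s)

/-- Common-knowledge reachability for coalition `A`:
reflexive-transitive closure of the union of the `∼ᵢ`, `i ∈ A`. -/
def ck (G : iCGS Ag AP S Act) (A : Set Ag) : S → S → Prop :=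
  Relation.ReflTransGen (fun s s' => ∃ i ∈ A, G.indist i s s')

/-- Common-knowledge neighbourhood `C_A(q)`. -/
def CKN (G : iCGS Ag AP S Act) (A : Set Ag) (q : S) : Set S := {r | G.ck A q r}

/-- "Everybody knows" neighbourhood `E_A(q)`. -/
def EKN (G : iCGS Ag AP S Act) (A : Set Ag) (q : S) : Set S :=
  {r | ∃ i ∈ A, G.indist i q r}

/-- `σ` is a partial uniform strategy for coalition `A` with domain `Q`. -/
def IsPStrat (G : iCGS Ag AP S Act) (A : Set Ag) (Q : Set S) (σ : Ag → S → Act) : Prop :=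
  (∀ i ∈ A, ∀ s ∈ Q, σ i s ∈ G.protocol i s) ∧
  (∀ i ∈ A, ∀ s ∈ Q, ∀ t ∈ Q, G.indist i s t → σ i s = σ i t)

/-- `σ` is a (total) uniform memoryless strategy for coalition `A`. -/
def IsStrat (G : iCGS Ag AP S Act) (A : Set Ag) (σ : Ag → S → Act) : Prop :=
  G.IsPStrat A Set.univ σ

/-- Successors of `s` under joint actions compatible with `σ` on coalition `A`. -/
def succ (G : iCGS Ag AP S Act) (A : Set Ag) (σ : Ag → S → Act) (s : S) : Set S :=
  {t | ∃ a : Ag → Act, (∀ i ∈ A, a i = σ i s) ∧ G.trans s a t}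

/-- Objective outcome set of strategy `σ` at `q` (runs as infinite state sequences). -/
def OutObj (G : iCGS Ag AP S Act) (A : Set Ag) (σ : Ag → S → Act) (q : S) :
    Set (ℕ → S) :=
  {lam | lam 0 = q ∧ ∀ j, lam (j + 1) ∈ G.succ A σ (lam j)}

/-- Subjective outcome set: union of objective outcomes over states indistinguishable
from `q` for some member of the coalition. -/
def OutSubj (G : iCGS Ag AP S Act) (A : Set Ag) (σ : Ag → S → Act) (q : S) :
    Set (ℕ → S) :=
  {lam | ∃ i ∈ A, ∃ r, G.indist i q r ∧ lam ∈ G.OutObj A σ r}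

/-- Outcome set: subjective (`x = true`) or objective (`x = false`).
(For a nonempty coalition the subjective case coincides with the union of
objective outcomes over indistinguishable states, by reflexivity; for the
empty coalition it degenerates to the objective case.) -/
def Out (G : iCGS Ag AP S Act) (x : Bool) (A : Set Ag) (σ : Ag → S → Act) (q : S) :
    Set (ℕ → S) :=
  if x then G.OutObj A σ q ∪ G.OutSubj A σ q else G.OutObj A σ q

/-- `R` is a simulation for coalition `A` from `G` to `G'` (Def. of simulation):
existence of a strategy simulator over common-knowledge neighbourhoods with
(a) atom agreement, (b) epistemic back-condition, (c) strategy transfer, and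
(2) injectivity modulo common-knowledge neighbourhoods. -/
def IsSimulation (G : iCGS Ag AP S Act) (G' : iCGS Ag AP S' Act') (A : Set Ag)
    (R : S → S' → Prop) : Prop :=
  (∃ ST : Set S → Set S' → (Ag → S → Act) → (Ag → S' → Act'),
    ∀ q q', R q q' →
      (∀ σ, G.IsPStrat A (G.CKN A q) σ →
        G'.IsPStrat A (G'.CKN A q') (ST (G.CKN A q) (G'.CKN A q') σ)) ∧
      (∀ r ∈ G.CKN A q, ∀ r' ∈ G'.CKN A q', R r r' →
        ∀ σ, G.IsPStrat A (G.CKN A q) σ →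
          ∀ s' ∈ G'.succ A (ST (G.CKN A q) (G'.CKN A q') σ) r',
            ∃ s ∈ G.succ A σ r, R s s')) ∧
  (∀ q q', R q q' → G.label q = G'.label q') ∧
  (∀ q q', R q q' → ∀ i ∈ A, ∀ r', G'.indist i q' r' →
    ∃ r, G.indist i q r ∧ R r r') ∧
  (∀ q₁ q₂ q', R q₁ q' → R q₂ q' → G.CKN A q₁ = G.CKN A q₂)

/-- `R` is a bisimulation for `A` iff both `R` and its converse are `A`-simulations. -/
def IsBisimulation (G : iCGS Ag AP S Act) (G' : iCGS Ag AP S' Act') (A : Set Ag)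
    (R : S → S' → Prop) : Prop :=
  G.IsSimulation G' A R ∧ G'.IsSimulation G A (fun q' q => R q q')

end iCGS
mutual
/-- State formulas of ATL*. -/
inductive SF (AP Ag : Type) : Type where
  | atom : AP → SF AP Ag
  | neg : SF AP Ag → SF AP Ag
  | imp : SF AP Ag → SF AP Ag → SF AP Ag
  | coal : Set Ag → PF AP Ag → SF AP Ag
/-- Path formulas of ATL*. -/
inductive PF (AP Ag : Type) : Type where
  | of : SF AP Ag → PF AP Ag
  | neg : PF AP Ag → PF AP Ag
  | imp : PF AP Ag → PF AP Ag → PF AP Ag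
  | next : PF AP Ag → PF AP Ag
  | untl : PF AP Ag → PF AP Ag → PF AP Ag
end

variable {Ag AP S Act : Type}

mutual
/-- Satisfaction of ATL* state formulas; `x = true` is the subjective,
`x = false` the objective imperfect-information memoryless semantics. -/
def SSat (G : iCGS Ag AP S Act) (x : Bool) : S → SF AP Ag → Prop
  | s, .atom p => p ∈ G.label s
  | s, .neg φ => ¬ SSat G x s φ
  | s, .imp φ ψ => SSat G x s φ → SSat G x s ψ
  | s, .coal A ψ =>
      ∃ σ, G.IsStrat A σ ∧ ∀ lam ∈ G.Out x A σ s, PSat G x lam ψ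
/-- Satisfaction of ATL* path formulas on runs. -/
def PSat (G : iCGS Ag AP S Act) (x : Bool) : (ℕ → S) → PF AP Ag → Prop
  | lam, .of φ => SSat G x (lam 0) φ
  | lam, .neg ψ => ¬ PSat G x lam ψ
  | lam, .imp ψ χ => PSat G x lam ψ → PSat G x lam χ
  | lam, .next ψ => PSat G x (fun n => lam (n + 1)) ψ
  | lam, .untl ψ χ => ∃ j, PSat G x (fun n => lam (n + j)) χ ∧
      ∀ k < j, PSat G x (fun n => lam (n + k)) ψ
end

mutual
/-- `φ` is an `A`-formula: `A` is the only coalition occurring in it. -/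
def SOnly (A : Set Ag) : SF AP Ag → Prop
  | .atom _ => True
  | .neg φ => SOnly A φ
  | .imp φ ψ => SOnly A φ ∧ SOnly A ψ
  | .coal B ψ => B = A ∧ POnly A ψ
def POnly (A : Set Ag) : PF AP Ag → Prop
  | .of φ => SOnly A φ
  | .neg ψ => POnly A ψ
  | .imp ψ χ => POnly A ψ ∧ POnly A χ
  | .next ψ => POnly A ψ
  | .untl ψ χ => POnly A ψ ∧ POnly A χ
end



namespace iCGS

variable {Ag AP S S' Act Act' : Type}

lemma ck_symm (G : iCGS Ag AP S Act) (hG : G.Valid) (A : Set Ag) {s t : S}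
    (h : G.ck A s t) : G.ck A t s := by
  induction h with
  | refl => exact Relation.ReflTransGen.refl
  | tail _ h2 ih =>
    obtain ⟨i, hi, hind⟩ := h2
    exact Relation.ReflTransGen.head ⟨i, hi, (hG.1 i).symm hind⟩ ih

lemma ckn_eq (G : iCGS Ag AP S Act) (hG : G.Valid) (A : Set Ag) {s t : S}
    (h : G.ck A s t) : G.CKN A s = G.CKN A t := by
  ext u
  constructor
  · exact fun hu => (G.ck_symm hG A h).trans hu
  · exact fun hu => h.trans hu

lemma mem_ckn_self (G : iCGS Ag AP S Act) (A : Set Ag) (q : S) : q ∈ G.CKN A q :=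
  Relation.ReflTransGen.refl

lemma sim_back {G : iCGS Ag AP S Act} {G' : iCGS Ag AP S' Act'} {A : Set Ag}
    {R : S → S' → Prop} (hsim : G.IsSimulation G' A R) {q : S} {q' r' : S'}
    (hq : R q q') (h : G'.ck A q' r') : ∃ r, G.ck A q r ∧ R r r' := by
  induction h with
  | refl => exact ⟨q, Relation.ReflTransGen.refl, hq⟩
  | tail _ h2 ih =>
    obtain ⟨r, hr, hRr⟩ := ih
    obtain ⟨i, hi, hind⟩ := h2
    obtain ⟨s, hs, hRs⟩ := hsim.2.2.1 r _ hRr i hi _ hind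
    exact ⟨s, hr.tail ⟨i, hi, hs⟩, hRs⟩

lemma mem_ckn_of_R {G : iCGS Ag AP S Act} {G' : iCGS Ag AP S' Act'} {A : Set Ag}
    {R : S → S' → Prop} (hsim : G.IsSimulation G' A R) {r t : S} {r' t' : S'}
    (hrr : R r r') (htt : R t t') (h : r' ∈ G'.CKN A t') : r ∈ G.CKN A t := by
  obtain ⟨u, hu, hur⟩ := sim_back hsim htt h
  have h2 := hsim.2.2.2 u r r' hur hrr
  have : r ∈ G.CKN A u := by rw [h2]; exact G.mem_ckn_self A r
  exact hu.trans this

lemma exists_strat (G : iCGS Ag AP S Act) (hG : G.Valid) (A : Set Ag) :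
    ∃ δ : Ag → S → Act, G.IsStrat A δ := by
  classical
  have hrep : ∀ i : Ag, ∃ f : S → S,
      (∀ s, G.indist i s (f s)) ∧ (∀ s t, G.indist i s t → f s = f t) := by
    intro i
    letI st : Setoid S := ⟨G.indist i, hG.1 i⟩
    refine ⟨fun s => (Quotient.mk st s).out, ?_, ?_⟩
    · intro s
      exact (hG.1 i).symm (Quotient.exact (Quotient.out_eq (Quotient.mk st s)))
    · intro s t h
      exact congrArg Quotient.out (Quotient.sound h)
  choose f hf1 hf2 using hrep
  choose δ hδ using fun i (r : S) => hG.2.1 i r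
  refine ⟨fun i s => δ i (f i s), ⟨?_, ?_⟩⟩
  · intro i _ s _
    have := hδ i (f i s)
    rwa [hG.2.2.1 i (f i s) s ((hG.1 i).symm (hf1 i s))] at this
  · intro i _ s _ t _ h
    exact congrArg (δ i) (hf2 i s t h)


lemma transfer (G : iCGS Ag AP S Act) (G' : iCGS Ag AP S' Act')
    (hG : G.Valid) (hG' : G'.Valid) (A : Set Ag) (R : S → S' → Prop)
    (hsim : G.IsSimulation G' A R) {q : S} {q' : S'} (hqq' : R q q')
    (σ : Ag → S → Act) (hσ : G.IsStrat A σ) (x : Bool) :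
    ∃ σ', G'.IsStrat A σ' ∧ ∀ lam' ∈ G'.Out x A σ' q',
      ∃ lam ∈ G.Out x A σ q, ∀ i, R (lam i) (lam' i) := by
  classical
  obtain ⟨ST, hST⟩ := hsim.1
  obtain ⟨δ, hδ⟩ := G'.exists_strat hG' A
  -- σ restricts to a partial strategy on any subset
  have hσP : ∀ Q : Set S, G.IsPStrat A Q σ := by
    intro Q
    exact ⟨fun i hi s _ => hσ.1 i hi s trivial,
           fun i hi s _ t _ h => hσ.2 i hi s trivial t trivial h⟩
  set P : S' → Prop := fun s' => ∃ t t', R t t' ∧ s' ∈ G'.CKN A t' with hP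
  set σ' : Ag → S' → Act' := fun i s' =>
    if h : P s' then
      ST (G.CKN A h.choose) (G'.CKN A h.choose_spec.choose) σ i s'
    else δ i s' with hσ'def
  -- well-definedness of the CKN neighbourhoods
  have hwd : ∀ (t₁ t₂ : S) (t'₁ t'₂ s'₁ s'₂ : S'), R t₁ t'₁ → R t₂ t'₂ →
      s'₁ ∈ G'.CKN A t'₁ → s'₂ ∈ G'.CKN A t'₂ → G'.ck A s'₁ s'₂ →
      G.CKN A t₁ = G.CKN A t₂ ∧ G'.CKN A t'₁ = G'.CKN A t'₂ := by
    intro t₁ t₂ t'₁ t'₂ s'₁ s'₂ h1 h2 m1 m2 hck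
    have e' : G'.CKN A t'₁ = G'.CKN A t'₂ := by
      rw [G'.ckn_eq hG' A m1, G'.ckn_eq hG' A hck, G'.ckn_eq hG' A m2]
    have ht'₂ : t'₂ ∈ G'.CKN A t'₁ := by rw [e']; exact G'.mem_ckn_self A t'₂
    obtain ⟨u, hu, hut⟩ := sim_back hsim h1 ht'₂
    have e1 : G.CKN A u = G.CKN A t₂ := hsim.2.2.2 u t₂ t'₂ hut h2
    exact ⟨(G.ckn_eq hG A hu).trans e1, e'⟩
  -- value of σ' on any CKN neighbourhood of an R-image
  have hval : ∀ (t : S) (t' : S'), R t t' → ∀ s' ∈ G'.CKN A t', ∀ i,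
      σ' i s' = ST (G.CKN A t) (G'.CKN A t') σ i s' := by
    intro t t' htt s' hs' i
    have hPs : P s' := ⟨t, t', htt, hs'⟩
    have h1 := hPs.choose_spec.choose_spec.1
    have h2 := hPs.choose_spec.choose_spec.2
    obtain ⟨e1, e2⟩ := hwd hPs.choose t hPs.choose_spec.choose t' s' s' h1 htt
      h2 hs' Relation.ReflTransGen.refl
    simp only [hσ'def, dif_pos hPs, e1, e2]
  have hσ'strat : G'.IsStrat A σ' := by
    constructor
    · intro i hi s' _
      by_cases hPs : P s'
      · obtain ⟨t, t', htt, hs'⟩ := hPs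
        rw [hval t t' htt s' hs' i]
        exact ((hST t t' htt).1 σ (hσP _)).1 i hi s' hs'
      · simp only [hσ'def, dif_neg hPs]
        exact hδ.1 i hi s' trivial
    · intro i hi s' _ u' _ hind
      have hcksu : G'.ck A s' u' := Relation.ReflTransGen.single ⟨i, hi, hind⟩
      by_cases hPs : P s'
      · obtain ⟨t, t', htt, hs'⟩ := hPs
        have hu' : u' ∈ G'.CKN A t' := hs'.tail ⟨i, hi, hind⟩
        rw [hval t t' htt s' hs' i, hval t t' htt u' hu' i]
        exact ((hST t t' htt).1 σ (hσP _)).2 i hi s' hs' u' hu' hind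
      · have hPu : ¬ P u' := by
          intro ⟨t, t', htt, hu'⟩
          exact hPs ⟨t, t', htt, hu'.tail ⟨i, hi, (hG'.1 i).symm hind⟩⟩
        simp only [hσ'def, dif_neg hPs, dif_neg hPu]
        exact hδ.2 i hi s' trivial u' trivial hind
  -- one-step lifting
  have hstep : ∀ (s : S) (s' u' : S'), R s s' → u' ∈ G'.succ A σ' s' →
      ∃ u, u ∈ G.succ A σ s ∧ R u u' := by
    intro s s' u' hss' hu'
    have hmem : s' ∈ G'.CKN A s' := G'.mem_ckn_self A s'
    have hu'2 : u' ∈ G'.succ A (ST (G.CKN A s) (G'.CKN A s') σ) s' := by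
      obtain ⟨a, ha, htr⟩ := hu'
      exact ⟨a, fun i hi => (ha i hi).trans (hval s s' hss' s' hmem i), htr⟩
    obtain ⟨u, hu, huu'⟩ := (hST s s' hss').2 s (G.mem_ckn_self A s) s' hmem hss'
      σ (hσP _) u' hu'2
    exact ⟨u, hu, huu'⟩
  -- run lifting
  have hlift : ∀ (r : S) (r' : S'), R r r' → ∀ lam' ∈ G'.OutObj A σ' r',
      ∃ lam ∈ G.OutObj A σ r, ∀ i, R (lam i) (lam' i) := by
    intro r r' hrr' lam' hlam'
    choose F hF1 hF2 using hstep
    let g : ∀ j : ℕ, {s : S // R s (lam' j)} := fun j =>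
      Nat.rec (motive := fun j => {s : S // R s (lam' j)})
        ⟨r, by rw [hlam'.1]; exact hrr'⟩
        (fun j p => ⟨F p.1 (lam' j) (lam' (j+1)) p.2 (hlam'.2 j),
          hF2 p.1 (lam' j) (lam' (j+1)) p.2 (hlam'.2 j)⟩) j
    refine ⟨fun j => (g j).1, ⟨rfl, ?_⟩, fun j => (g j).2⟩
    intro j
    exact hF1 (g j).1 (lam' j) (lam' (j+1)) (g j).2 (hlam'.2 j)
  refine ⟨σ', hσ'strat, ?_⟩
  intro lam' hlam'
  cases x with
  | false =>
    simp only [Out, if_neg (Bool.false_ne_true)] at hlam' ⊢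
    obtain ⟨lam, h1, h2⟩ := hlift q q' hqq' lam' hlam'
    exact ⟨lam, h1, h2⟩
  | true =>
    simp only [Out, if_pos rfl] at hlam' ⊢
    rcases hlam' with hobj | hsubj
    · obtain ⟨lam, h1, h2⟩ := hlift q q' hqq' lam' hobj
      exact ⟨lam, Or.inl h1, h2⟩
    · obtain ⟨i, hi, r', hind', hobj⟩ := hsubj
      obtain ⟨r, hind, hRr⟩ := hsim.2.2.1 q q' hqq' i hi r' hind'
      obtain ⟨lam, h1, h2⟩ := hlift r r' hRr lam' hobj
      exact ⟨lam, Or.inr ⟨i, hi, r, hind, h1⟩, h2⟩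

end iCGS

section Main

variable {Ag AP S S' Act Act' : Type}

mutual

theorem Smain (G : iCGS Ag AP S Act) (G' : iCGS Ag AP S' Act')
    (hG : G.Valid) (hG' : G'.Valid) (A : Set Ag) (R : S → S' → Prop)
    (hR : G.IsBisimulation G' A R) (x : Bool) :
    ∀ φ : SF AP Ag, ∀ q q', R q q' → SOnly A φ →
    (SSat G x q φ ↔ SSat G' x q' φ)
  | .atom p, q, q', hqq', _ => by
    simp only [SSat]
    rw [hR.1.2.1 q q' hqq']
  | .neg φ, q, q', hqq', hφ => by
    simp only [SSat]
    exact not_congr (Smain G G' hG hG' A R hR x φ q q' hqq' hφ)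
  | .imp φ ψ, q, q', hqq', hφ => by
    simp only [SSat]
    exact imp_congr (Smain G G' hG hG' A R hR x φ q q' hqq' hφ.1)
      (Smain G G' hG hG' A R hR x ψ q q' hqq' hφ.2)
  | .coal B ψ, q, q', hqq', hφ => by
    have hφ' : B = A ∧ POnly A ψ := hφ
    obtain ⟨hBA, hψ⟩ := hφ'
    simp only [SSat]
    rw [hBA]
    constructor
    · rintro ⟨σ, hσ, hall⟩
      obtain ⟨σ', hσ', hout⟩ := G.transfer G' hG hG' A R hR.1 hqq' σ hσ x
      refine ⟨σ', hσ', fun lam' h => ?_⟩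
      obtain ⟨lam, hlam, hrel⟩ := hout lam' h
      exact (Pmain G G' hG hG' A R hR x ψ lam lam' hrel hψ).mp (hall lam hlam)
    · rintro ⟨σ', hσ', hall⟩
      obtain ⟨σ, hσ, hout⟩ := G'.transfer G hG' hG A (fun a b => R b a) hR.2
        hqq' σ' hσ' x
      refine ⟨σ, hσ, fun lam h => ?_⟩
      obtain ⟨lam', hlam', hrel⟩ := hout lam h
      exact (Pmain G G' hG hG' A R hR x ψ lam lam' hrel hψ).mpr (hall lam' hlam')

theorem Pmain (G : iCGS Ag AP S Act) (G' : iCGS Ag AP S' Act')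
    (hG : G.Valid) (hG' : G'.Valid) (A : Set Ag) (R : S → S' → Prop)
    (hR : G.IsBisimulation G' A R) (x : Bool) :
    ∀ ψ : PF AP Ag, ∀ (lam : ℕ → S) (lam' : ℕ → S'),
    (∀ i, R (lam i) (lam' i)) → POnly A ψ →
    (PSat G x lam ψ ↔ PSat G' x lam' ψ)
  | .of φ, lam, lam', h, hψ => by
    simp only [PSat]
    exact Smain G G' hG hG' A R hR x φ (lam 0) (lam' 0) (h 0) hψ
  | .neg ψ, lam, lam', h, hψ => by
    simp only [PSat]
    exact not_congr (Pmain G G' hG hG' A R hR x ψ lam lam' h hψ)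
  | .imp ψ χ, lam, lam', h, hψ => by
    simp only [PSat]
    exact imp_congr (Pmain G G' hG hG' A R hR x ψ lam lam' h hψ.1)
      (Pmain G G' hG hG' A R hR x χ lam lam' h hψ.2)
  | .next ψ, lam, lam', h, hψ => by
    simp only [PSat]
    exact Pmain G G' hG hG' A R hR x ψ _ _ (fun i => h (i + 1)) hψ
  | .untl ψ χ, lam, lam', h, hψ => by
    simp only [PSat]
    constructor
    · rintro ⟨j, hj, hk⟩
      exact ⟨j, (Pmain G G' hG hG' A R hR x χ _ _ (fun i => h (i + j)) hψ.2).mp hj,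
        fun k hkj => (Pmain G G' hG hG' A R hR x ψ _ _ (fun i => h (i + k)) hψ.1).mp (hk k hkj)⟩
    · rintro ⟨j, hj, hk⟩
      exact ⟨j, (Pmain G G' hG hG' A R hR x χ _ _ (fun i => h (i + j)) hψ.2).mpr hj,
        fun k hkj => (Pmain G G' hG hG' A R hR x ψ _ _ (fun i => h (i + k)) hψ.1).mpr (hk k hkj)⟩

end

end Main

/-- the preservation theorem. An `A`-bisimulation preserves all
state and path `A`-formulas of ATL*, under both the subjective (`x = true`)
and objective (`x = false`) imperfect-information memoryless semantics. -/
theorem bisimulation_preserves_ATLstar {Ag AP S S' Act Act' : Type}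
    (G : iCGS Ag AP S Act) (G' : iCGS Ag AP S' Act')
    (hG : G.Valid) (hG' : G'.Valid) (A : Set Ag) (R : S → S' → Prop)
    (hR : G.IsBisimulation G' A R) (x : Bool) :
    (∀ q q', R q q' → ∀ φ : SF AP Ag, SOnly A φ →
      (SSat G x q φ ↔ SSat G' x q' φ)) ∧
    (∀ (lam : ℕ → S) (lam' : ℕ → S'), (∀ i, R (lam i) (lam' i)) →
      ∀ ψ : PF AP Ag, POnly A ψ →
      (PSat G x lam ψ ↔ PSat G' x lam' ψ)) :=
  ⟨fun q q' hqq' φ hφ => Smain G G' hG hG' A R hR x φ q q' hqq' hφ,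
   fun lam lam' h ψ hψ => Pmain G G' hG hG' A R hR x ψ lam lam' h hψ⟩
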